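/- For every positive integer n and every real x > 0, ∏_{p=1}^{n} [ 2^{−2^{p−1} x} · Γ((2^p x + 1)/2) / Γ((2^p x + 2)/4)² ]^{2^{−p}} = 2^{−n x/2 − 2^{−n}} · (2^n x − 1)^{2^{−n}} · Γ((2^n x − 1)/2)^{2^{−n}} / Γ((x+1)/2), provided 2^p x > 1 for all 1 ≤ p ≤ n so that all Gamma arguments are positive. -/

import Mathlib

open Real Finset

lemma nielsen_term (x : ℝ) (hx : 0 < x) (n : ℕ) :
    ((2:ℝ) ^ (-(2:ℝ)^(((n+1:ℕ):ℝ)-1) * x) * Real.Gamma (((2:ℝ)^(n+1) * x + 1)/2)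
        / (Real.Gamma (((2:ℝ)^(n+1) * x + 2)/4))^2) ^ ((2:ℝ)^(-((n+1:ℕ):ℝ)))
    = (2:ℝ) ^ (-x/2) * (Real.Gamma (((2:ℝ)^(n+1) * x + 1)/2)) ^ ((2:ℝ)^(-((n+1:ℕ):ℝ)))
        / (Real.Gamma (((2:ℝ)^n * x + 1)/2)) ^ ((2:ℝ)^(-(n:ℝ))) := by
  have h1 : ((2:ℝ)^(n+1) * x + 2)/4 = ((2:ℝ)^n * x + 1)/2 := by ring
  rw [h1]
  have hA : 0 < Real.Gamma (((2:ℝ)^(n+1) * x + 1)/2) :=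
    Real.Gamma_pos_of_pos (by positivity)
  have hB : 0 < Real.Gamma (((2:ℝ)^n * x + 1)/2) :=
    Real.Gamma_pos_of_pos (by positivity)
  set A := Real.Gamma (((2:ℝ)^(n+1) * x + 1)/2)
  set B := Real.Gamma (((2:ℝ)^n * x + 1)/2)
  have h2 : ((2:ℝ) ^ (-(2:ℝ)^(((n+1:ℕ):ℝ)-1) * x)) ^ ((2:ℝ)^(-((n+1:ℕ):ℝ)))
      = (2:ℝ) ^ (-x/2) := by
    rw [← Real.rpow_mul (by norm_num : (0:ℝ) ≤ 2)]
    congr 1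
    push_cast
    have : ((n:ℝ)+1) - 1 = (n:ℝ) := by ring
    rw [this]
    rw [show -(2:ℝ)^(n:ℝ) * x * (2:ℝ)^(-((n:ℝ)+1)) = -x/2 * ((2:ℝ)^(n:ℝ) * (2:ℝ)^(-((n:ℝ)+1)) * 2) by ring]
    rw [← Real.rpow_add (by norm_num : (0:ℝ) < 2)]
    norm_num
  have h3 : ((B^2) : ℝ) ^ ((2:ℝ)^(-((n+1:ℕ):ℝ))) = B ^ ((2:ℝ)^(-(n:ℝ))) := by
    rw [← Real.rpow_natCast B 2, ← Real.rpow_mul hB.le]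
    congr 1
    push_cast
    rw [show ((2:ℝ)) * (2:ℝ)^(-((n:ℝ)+1)) = (2:ℝ)^(1:ℝ) * (2:ℝ)^(-((n:ℝ)+1)) by norm_num,
      ← Real.rpow_add (by norm_num : (0:ℝ) < 2)]
    norm_num
  rw [Real.div_rpow (by positivity) (by positivity), Real.mul_rpow (by positivity) hA.le,
    h2, h3]

lemma nielsen_prod (x : ℝ) (hx : 0 < x) (n : ℕ) :
    ∏ p ∈ Finset.Icc 1 n,
      ((2:ℝ) ^ (-(2:ℝ)^((p:ℝ)-1) * x) * Real.Gamma (((2:ℝ)^p * x + 1)/2)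
        / (Real.Gamma (((2:ℝ)^p * x + 2)/4))^2) ^ ((2:ℝ)^(-(p:ℝ)))
    = (2:ℝ) ^ (-(n:ℝ)*x/2) * (Real.Gamma (((2:ℝ)^n * x + 1)/2)) ^ ((2:ℝ)^(-(n:ℝ)))
        / Real.Gamma ((x+1)/2) := by
  have hC : 0 < Real.Gamma ((x+1)/2) := Real.Gamma_pos_of_pos (by positivity)
  induction n with
  | zero =>
    simp [Real.rpow_one, hC.ne']
  | succ n ih =>
    rw [Finset.prod_Icc_succ_top (Nat.succ_le_succ (Nat.zero_le n)), ih, nielsen_term x hx n]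
    have hA : 0 < Real.Gamma (((2:ℝ)^(n+1) * x + 1)/2) :=
      Real.Gamma_pos_of_pos (by positivity)
    have hB : 0 < Real.Gamma (((2:ℝ)^n * x + 1)/2) :=
      Real.Gamma_pos_of_pos (by positivity)
    have hBe : (0:ℝ) < (Real.Gamma (((2:ℝ)^n * x + 1)/2)) ^ ((2:ℝ)^(-(n:ℝ))) :=
      Real.rpow_pos_of_pos hB _
    have h2 : (2:ℝ) ^ (-((n:ℝ) * x)/2) * (2:ℝ) ^ (-x/2) = (2:ℝ) ^ ((-1 + -(n:ℝ)) * x / 2) := by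
      rw [← Real.rpow_add (by norm_num : (0:ℝ) < 2)]
      congr 1
      ring
    field_simp
    rw [← Real.rpow_add (by norm_num : (0:ℝ) < 2)]; congr 1; push_cast
    ring

theorem nielsen_product (n : ℕ) (hn : 0 < n) (x : ℝ) (hx : 1/2 < x)
    (hx' : ∀ p : ℕ, 1 ≤ p → p ≤ n → 1 < (2:ℝ)^p * x) :
    ∏ p ∈ Finset.Icc 1 n,
      ((2:ℝ) ^ (-(2:ℝ)^((p:ℝ)-1) * x) * Real.Gamma (((2:ℝ)^p * x + 1)/2)
        / (Real.Gamma (((2:ℝ)^p * x + 2)/4))^2) ^ ((2:ℝ)^(-(p:ℝ)))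
    = (2:ℝ) ^ (-(n:ℝ)*x/2 - (2:ℝ)^(-(n:ℝ))) * ((2:ℝ)^n * x - 1) ^ ((2:ℝ)^(-(n:ℝ)))
        * (Real.Gamma (((2:ℝ)^n * x - 1)/2)) ^ ((2:ℝ)^(-(n:ℝ)))
        / Real.Gamma ((x+1)/2) := by
  have hx0 : 0 < x := lt_trans (by norm_num) hx
  rw [nielsen_prod x hx0 n]
  have hgt : 1 < (2:ℝ)^n * x := hx' n hn le_rfl
  have hz : (0:ℝ) < ((2:ℝ)^n * x - 1)/2 := by linarith
  have hG : Real.Gamma (((2:ℝ)^n * x + 1)/2)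
      = (((2:ℝ)^n * x - 1)/2) * Real.Gamma (((2:ℝ)^n * x - 1)/2) := by
    have := Real.Gamma_add_one (s := ((2:ℝ)^n * x - 1)/2) hz.ne'
    rw [show ((2:ℝ)^n * x - 1)/2 + 1 = ((2:ℝ)^n * x + 1)/2 by ring] at this
    exact this
  rw [hG]
  have hGp : 0 < Real.Gamma (((2:ℝ)^n * x - 1)/2) := Real.Gamma_pos_of_pos hz
  rw [Real.mul_rpow hz.le hGp.le, Real.div_rpow (by linarith) (by norm_num : (0:ℝ) ≤ 2)]
  have h2 : (2:ℝ) ^ (-(n:ℝ)*x/2 - (2:ℝ)^(-(n:ℝ)))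
      = (2:ℝ) ^ (-(n:ℝ)*x/2) / (2:ℝ) ^ ((2:ℝ)^(-(n:ℝ))) := by
    rw [Real.rpow_sub (by norm_num : (0:ℝ) < 2)]
  rw [h2]
  ring
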